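/- Let (u_t)_{t ∈ (0,1]} be a family of bounded operators on H with u_t* u_t = id_H for all t, such that: u₁ = id_H; t ↦ u_t is continuous on (0,1) in the operator norm; u_t → id_H and u_t* → id_H strongly as t → 1; and u_t u_t* → 0 strongly as t → 0. Define Φ(U,t) = (id_H − u_t u_t*) + u_t U u_t* for a unitary U and t ∈ (0,1], and Φ(U,0) = id_H. Then Φ(U,t) is unitary for every unitary U and every t ∈ [0,1], Φ(U,1) = U, Φ(U,0) = id_H, and the map Φ : 𝒰(H) × [0,1] → 𝒰(H) is jointly continuous when the unitary group 𝒰(H) carries the strong operator topology on both the domain and the codomain. -/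

import Mathlib

open Filter Topology Set ContinuousLinearMap

/-- The strong operator topology on the unitary group of `H`. -/
noncomputable def unitarySOT (H : Type*) [NormedAddCommGroup H] [InnerProductSpace ℂ H]
    [CompleteSpace H] : TopologicalSpace ↥(unitary (H →L[ℂ] H)) :=
  TopologicalSpace.induced (fun u => ((u : H →L[ℂ] H) : H → H))
    (inferInstance : TopologicalSpace (H → H))

set_option maxHeartbeats 1000000 in
/-- Given a family `u t` of isometric embeddings as in the Dixmier–Douady construction,
the map `Φ(U, t) = (id - u_t u_t*) + u_t U u_t*` (with `Φ(U, 0) = id`) takes unitary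
values on `[0,1]`, satisfies `Φ(U, 1) = U`, and is jointly continuous in the strong
operator topology on `𝒰(H) × [0,1]`. -/
theorem stmt12 {H : Type*} [NormedAddCommGroup H] [InnerProductSpace ℂ H]
    [CompleteSpace H] [TopologicalSpace.SeparableSpace H]
    (_hinf : ¬FiniteDimensional ℂ H)
    (u : ℝ → H →L[ℂ] H)
    (hiso : ∀ t ∈ Set.Ioc (0 : ℝ) 1, adjoint (u t) ∘L u t = 1)
    (hone : u 1 = 1)
    (hcont : ContinuousOn u (Set.Ioo 0 1))
    (hstrong1 : ∀ h : H, Tendsto (fun t => u t h) (nhdsWithin 1 (Set.Ioo (0 : ℝ) 1)) (nhds h))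
    (hstrong1' : ∀ h : H, Tendsto (fun t => adjoint (u t) h)
      (nhdsWithin 1 (Set.Ioo (0 : ℝ) 1)) (nhds h))
    (hstrong0 : ∀ h : H, Tendsto (fun t => u t (adjoint (u t) h))
      (nhdsWithin 0 (Set.Ioo (0 : ℝ) 1)) (nhds 0))
    (Φ : (H →L[ℂ] H) → ℝ → (H →L[ℂ] H))
    (hΦ : ∀ U : H →L[ℂ] H, ∀ t ∈ Set.Ioc (0 : ℝ) 1,
      Φ U t = (1 - u t ∘L adjoint (u t)) + u t ∘L U ∘L adjoint (u t))
    (hΦ0 : ∀ U : H →L[ℂ] H, Φ U 0 = 1) :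
    (∀ U ∈ unitary (H →L[ℂ] H), ∀ t ∈ Set.Icc (0 : ℝ) 1, Φ U t ∈ unitary (H →L[ℂ] H)) ∧
    (∀ U : H →L[ℂ] H, Φ U 1 = U) ∧
    @Continuous (↥(unitary (H →L[ℂ] H)) × Set.Icc (0 : ℝ) 1) (H → H)
      (@instTopologicalSpaceProd _ _ (unitarySOT H) inferInstance)
      (inferInstance : TopologicalSpace (H → H))
      (fun p => fun h : H => Φ (p.1 : H →L[ℂ] H) (p.2 : ℝ) h) := by
  -- basic consequences of `adjoint A ∘L A = 1`
  have isom_of : ∀ A : H →L[ℂ] H, adjoint A ∘L A = 1 → ∀ x : H, ‖A x‖ = ‖x‖ := by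
    intro A hA x
    have h2 : adjoint A (A x) = x := by
      have := congrArg (fun B : H →L[ℂ] H => B x) hA
      simpa using this
    have h1 : (inner ℂ (A x) (A x) : ℂ) = inner ℂ x x := by
      calc (inner ℂ (A x) (A x) : ℂ) = inner ℂ (adjoint A (A x)) x :=
            (adjoint_inner_left A x (A x)).symm
        _ = inner ℂ x x := by rw [h2]
    rw [norm_eq_sqrt_re_inner (𝕜 := ℂ) (A x), norm_eq_sqrt_re_inner (𝕜 := ℂ) x, h1]
  have hisom : ∀ t ∈ Set.Ioc (0 : ℝ) 1, ∀ x : H, ‖u t x‖ = ‖x‖ :=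
    fun t ht => isom_of (u t) (hiso t ht)
  have hBle : ∀ t ∈ Set.Ioc (0 : ℝ) 1, ∀ x : H, ‖adjoint (u t) x‖ ≤ ‖x‖ := by
    intro t ht x
    have hA : ‖u t‖ ≤ 1 := opNorm_le_bound _ zero_le_one fun y => by
      rw [hisom t ht y, one_mul]
    have hAd : ‖adjoint (u t)‖ = ‖u t‖ := LinearIsometryEquiv.norm_map _ _
    calc ‖adjoint (u t) x‖ ≤ ‖adjoint (u t)‖ * ‖x‖ := le_opNorm _ _
      _ ≤ 1 * ‖x‖ := mul_le_mul_of_nonneg_right (hAd ▸ hA) (norm_nonneg x)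
      _ = ‖x‖ := one_mul _
  have hUx : ∀ U ∈ unitary (H →L[ℂ] H), ∀ x : H, ‖U x‖ = ‖x‖ := by
    intro U hU
    refine isom_of U ?_
    have := (Unitary.mem_iff.mp hU).1
    rwa [star_eq_adjoint, mul_def] at this
  have opapp : ∀ (S T : H →L[ℂ] H) (x : H), ‖S x - T x‖ ≤ ‖S - T‖ * ‖x‖ := by
    intro S T x
    rw [← ContinuousLinearMap.sub_apply]
    exact le_opNorm _ _
  have hadjdiff : ∀ s t : ℝ, ‖adjoint (u s) - adjoint (u t)‖ = ‖u s - u t‖ := by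
    intro s t
    rw [← map_sub]
    exact LinearIsometryEquiv.norm_map _ _
  have tri : ∀ a b c : H, ‖a - c‖ ≤ ‖a - b‖ + ‖b - c‖ := by
    intro a b c
    rw [← sub_add_sub_cancel a b c]
    exact norm_add_le _ _
  -- algebraic key identity
  have key : ∀ t ∈ Set.Ioc (0 : ℝ) 1, ∀ X Y : H →L[ℂ] H,
      ((1 - u t * star (u t)) + u t * (X * star (u t))) *
        ((1 - u t * star (u t)) + u t * (Y * star (u t))) =
      (1 - u t * star (u t)) + u t * ((X * Y) * star (u t)) := by
    intro t ht X Y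
    have hba : star (u t) * u t = 1 := by
      rw [star_eq_adjoint, mul_def]; exact hiso t ht
    have hba' : ∀ Z : H →L[ℂ] H, star (u t) * (u t * Z) = Z := fun Z => by
      rw [← mul_assoc, hba, one_mul]
    simp only [sub_mul, mul_sub, add_mul, mul_add, one_mul, mul_one, mul_assoc, hba']
    abel
  -- the first assertion: unitarity
  have hΦform : ∀ (U : H →L[ℂ] H), ∀ t ∈ Set.Ioc (0 : ℝ) 1,
      Φ U t = (1 - u t * star (u t)) + u t * (U * star (u t)) := by
    intro U t ht
    rw [hΦ U t ht]
    simp only [← star_eq_adjoint, ← mul_def]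
  have hmem : ∀ U ∈ unitary (H →L[ℂ] H), ∀ t ∈ Set.Icc (0 : ℝ) 1,
      Φ U t ∈ unitary (H →L[ℂ] H) := by
    intro U hU t ht
    rcases eq_or_lt_of_le ht.1 with h0 | h0
    · rw [← h0, hΦ0]
      exact one_mem _
    · have htIoc : t ∈ Set.Ioc (0 : ℝ) 1 := ⟨h0, ht.2⟩
      rw [hΦform U t htIoc, Unitary.mem_iff]
      have hstar : star ((1 - u t * star (u t)) + u t * (U * star (u t))) =
          (1 - u t * star (u t)) + u t * (star U * star (u t)) := by
        simp only [star_add, star_sub, star_one, star_mul, star_star, mul_assoc]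
      constructor
      · rw [hstar, key t htIoc, (Unitary.mem_iff.mp hU).1, one_mul, sub_add_cancel]
      · rw [hstar, key t htIoc, (Unitary.mem_iff.mp hU).2, one_mul, sub_add_cancel]
  -- the second assertion
  have hΦ1 : ∀ U : H →L[ℂ] H, Φ U 1 = U := by
    intro U
    have ha : adjoint ((1 : H →L[ℂ] H)) = 1 := by rw [← star_eq_adjoint, star_one]
    rw [hΦ U 1 ⟨one_pos, le_refl 1⟩, hone, ha]
    simp only [← mul_def, one_mul, mul_one, sub_self, zero_add]
  refine ⟨hmem, hΦ1, ?_⟩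
  -- continuity
  letI : TopologicalSpace ↥(unitary (H →L[ℂ] H)) := unitarySOT H
  have hev : ∀ x : H, Continuous fun V : ↥(unitary (H →L[ℂ] H)) => (V : H →L[ℂ] H) x := by
    intro x
    have h1 : Continuous fun V : ↥(unitary (H →L[ℂ] H)) => ((V : H →L[ℂ] H) : H → H) :=
      continuous_induced_dom
    exact (continuous_apply x).comp h1
  apply continuous_pi
  intro h
  have happly : ∀ (U : H →L[ℂ] H), ∀ t ∈ Set.Ioc (0 : ℝ) 1,
      Φ U t h = (h - u t (adjoint (u t) h)) + u t (U (adjoint (u t) h)) := by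
    intro U t ht
    rw [hΦ U t ht]
    simp
  rw [continuous_iff_continuousAt]
  rintro ⟨U₀, t₀, ht₀Icc⟩
  -- second coordinate tends to `t₀` within `Icc 0 1`
  have hts : Tendsto (fun p : ↥(unitary (H →L[ℂ] H)) × ↥(Set.Icc (0:ℝ) 1) => (p.2 : ℝ))
      (𝓝 (U₀, ⟨t₀, ht₀Icc⟩)) (𝓝[Set.Icc (0:ℝ) 1] t₀) := by
    have h1 : map (Subtype.val) (𝓝 (⟨t₀, ht₀Icc⟩ : ↥(Set.Icc (0:ℝ) 1)))
        = 𝓝[Set.Icc (0:ℝ) 1] t₀ := map_nhds_subtype_val _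
    rw [← h1]
    exact tendsto_map.comp (continuous_snd.tendsto _)
  rcases eq_or_ne t₀ 0 with rfl | ht0
  · -- t₀ = 0
    have hsnd : (𝓝 (⟨0, ht₀Icc⟩ : ↥(Set.Icc (0:ℝ) 1))) ≤
        comap Subtype.val (𝓝[Set.Ioo (0:ℝ) 1] 0) ⊔ pure ⟨0, ht₀Icc⟩ := by
      have h1 : (𝓝 (⟨0, ht₀Icc⟩ : ↥(Set.Icc (0:ℝ) 1)))
          = comap Subtype.val (𝓝[Set.Icc (0:ℝ) 1] 0) := by
        rw [nhds_subtype_eq_comap, nhdsWithin, comap_inf, comap_principal]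
        have h2 : (Subtype.val : ↥(Set.Icc (0:ℝ) 1) → ℝ) ⁻¹' (Set.Icc (0:ℝ) 1) = univ :=
          eq_univ_of_forall fun x => x.2
        rw [h2, principal_univ, inf_top_eq]
      have h2 : 𝓝[Set.Icc (0:ℝ) 1] (0:ℝ) = 𝓝[Set.Ioo (0:ℝ) 1] 0 ⊔ pure 0 := by
        rw [nhdsWithin_Icc_eq_nhdsGE zero_lt_one,
          ← nhdsWithin_Ico_eq_nhdsGE zero_lt_one,
          ← Ioo_union_left zero_lt_one, nhdsWithin_union, nhdsWithin_singleton]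
      rw [h1, h2, comap_sup]
      refine sup_le_sup le_rfl ?_
      rw [comap_pure, ← principal_singleton]
      exact principal_mono.mpr fun x hx => Set.mem_singleton_iff.mpr (Subtype.ext hx)
    have hsplit : (𝓝 ((U₀, ⟨0, ht₀Icc⟩) : ↥(unitary (H →L[ℂ] H)) × ↥(Set.Icc (0:ℝ) 1))) ≤
        (𝓝 U₀ ×ˢ comap Subtype.val (𝓝[Set.Ioo (0:ℝ) 1] 0)) ⊔ (𝓝 U₀ ×ˢ pure ⟨0, ht₀Icc⟩) := by
      rw [nhds_prod_eq, ← prod_sup]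
      exact prod_mono le_rfl hsnd
    show Tendsto (fun p : ↥(unitary (H →L[ℂ] H)) × ↥(Set.Icc (0:ℝ) 1) =>
      Φ (p.1 : H →L[ℂ] H) (p.2 : ℝ) h) (𝓝 (U₀, ⟨0, ht₀Icc⟩)) (𝓝 (Φ (U₀ : H →L[ℂ] H) (0:ℝ) h))
    rw [show Φ ((U₀ : H →L[ℂ] H)) (0:ℝ) h = h from by
      rw [hΦ0]; exact ContinuousLinearMap.one_apply h]
    refine Tendsto.mono_left (tendsto_sup.mpr ⟨?_, ?_⟩) hsplit
    · -- within Ioo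
      have htIoo0 : Tendsto (fun p : ↥(unitary (H →L[ℂ] H)) × ↥(Set.Icc (0:ℝ) 1) => (p.2 : ℝ))
          (𝓝 U₀ ×ˢ comap Subtype.val (𝓝[Set.Ioo (0:ℝ) 1] 0)) (𝓝[Set.Ioo (0:ℝ) 1] 0) :=
        tendsto_comap.comp tendsto_snd
      apply tendsto_sub_nhds_zero_iff.mp
      apply squeeze_zero_norm' (a := fun p : ↥(unitary (H →L[ℂ] H)) × ↥(Set.Icc (0:ℝ) 1) =>
        2 * ‖u (p.2 : ℝ) (adjoint (u (p.2 : ℝ)) h)‖)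
      · filter_upwards [htIoo0.eventually eventually_mem_nhdsWithin] with p hp
        have hpIoc : ((p.2 : ℝ)) ∈ Set.Ioc (0:ℝ) 1 := ⟨hp.1, le_of_lt hp.2⟩
        rw [happly (p.1 : H →L[ℂ] H) (p.2 : ℝ) hpIoc]
        set A := u (p.2 : ℝ)
        set B := adjoint (u (p.2 : ℝ))
        set U := (p.1 : H →L[ℂ] H)
        have e1 : (h - A (B h) + A (U (B h))) - h = A (U (B h)) - A (B h) := by abel
        rw [e1]
        calc ‖A (U (B h)) - A (B h)‖ ≤ ‖A (U (B h))‖ + ‖A (B h)‖ := norm_sub_le _ _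
          _ = ‖A (B h)‖ + ‖A (B h)‖ := by
              rw [hisom _ hpIoc (U (B h)), hUx U p.1.2 (B h), hisom _ hpIoc (B h)]
          _ = 2 * ‖A (B h)‖ := by ring
      · have h3 := ((hstrong0 h).comp htIoo0).norm
        rw [norm_zero] at h3
        have h4 := h3.const_mul (2:ℝ)
        rw [mul_zero] at h4
        exact h4
    · -- at the point 0 itself
      have hevq : ∀ᶠ q in (𝓝 U₀ ×ˢ pure (⟨0, ht₀Icc⟩ : ↥(Set.Icc (0:ℝ) 1))),
          Φ ((q.1 : H →L[ℂ] H)) ((q.2 : ℝ)) h = h := by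
        filter_upwards [tendsto_snd.eventually (eventually_pure.mpr rfl)] with q hq
        rw [← hq]
        show Φ ((q.1 : H →L[ℂ] H)) (0:ℝ) h = h
        rw [hΦ0]
        exact ContinuousLinearMap.one_apply h
      rw [tendsto_congr' hevq]
      exact tendsto_const_nhds
  rcases eq_or_ne t₀ 1 with rfl | ht1
  · -- t₀ = 1
    have hsnd : (𝓝 (⟨1, ht₀Icc⟩ : ↥(Set.Icc (0:ℝ) 1))) ≤
        comap Subtype.val (𝓝[Set.Ioo (0:ℝ) 1] 1) ⊔ pure ⟨1, ht₀Icc⟩ := by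
      have h1 : (𝓝 (⟨1, ht₀Icc⟩ : ↥(Set.Icc (0:ℝ) 1)))
          = comap Subtype.val (𝓝[Set.Icc (0:ℝ) 1] 1) := by
        rw [nhds_subtype_eq_comap, nhdsWithin, comap_inf, comap_principal]
        have h2 : (Subtype.val : ↥(Set.Icc (0:ℝ) 1) → ℝ) ⁻¹' (Set.Icc (0:ℝ) 1) = univ :=
          eq_univ_of_forall fun x => x.2
        rw [h2, principal_univ, inf_top_eq]
      have h2 : 𝓝[Set.Icc (0:ℝ) 1] (1:ℝ) = 𝓝[Set.Ioo (0:ℝ) 1] 1 ⊔ pure 1 := by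
        rw [nhdsWithin_Icc_eq_nhdsLE zero_lt_one,
          ← nhdsWithin_Ioc_eq_nhdsLE zero_lt_one,
          ← Ioo_union_right zero_lt_one, nhdsWithin_union, nhdsWithin_singleton]
      rw [h1, h2, comap_sup]
      refine sup_le_sup le_rfl ?_
      rw [comap_pure, ← principal_singleton]
      exact principal_mono.mpr fun x hx => Set.mem_singleton_iff.mpr (Subtype.ext hx)
    have hsplit : (𝓝 ((U₀, ⟨1, ht₀Icc⟩) : ↥(unitary (H →L[ℂ] H)) × ↥(Set.Icc (0:ℝ) 1))) ≤
        (𝓝 U₀ ×ˢ comap Subtype.val (𝓝[Set.Ioo (0:ℝ) 1] 1)) ⊔ (𝓝 U₀ ×ˢ pure ⟨1, ht₀Icc⟩) := by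
      rw [nhds_prod_eq, ← prod_sup]
      exact prod_mono le_rfl hsnd
    show Tendsto (fun p : ↥(unitary (H →L[ℂ] H)) × ↥(Set.Icc (0:ℝ) 1) =>
      Φ (p.1 : H →L[ℂ] H) (p.2 : ℝ) h) (𝓝 (U₀, ⟨1, ht₀Icc⟩)) (𝓝 (Φ (U₀ : H →L[ℂ] H) (1:ℝ) h))
    rw [show Φ ((U₀ : H →L[ℂ] H)) (1:ℝ) h = (U₀ : H →L[ℂ] H) h from by rw [hΦ1]]
    refine Tendsto.mono_left (tendsto_sup.mpr ⟨?_, ?_⟩) hsplit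
    · -- within Ioo
      have htIoo1 : Tendsto (fun p : ↥(unitary (H →L[ℂ] H)) × ↥(Set.Icc (0:ℝ) 1) => (p.2 : ℝ))
          (𝓝 U₀ ×ˢ comap Subtype.val (𝓝[Set.Ioo (0:ℝ) 1] 1)) (𝓝[Set.Ioo (0:ℝ) 1] 1) :=
        tendsto_comap.comp tendsto_snd
      apply tendsto_sub_nhds_zero_iff.mp
      apply squeeze_zero_norm' (a := fun p : ↥(unitary (H →L[ℂ] H)) × ↥(Set.Icc (0:ℝ) 1) =>
        (‖h - u (p.2 : ℝ) h‖ + 2 * ‖h - adjoint (u (p.2 : ℝ)) h‖) +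
          (‖(p.1 : H →L[ℂ] H) h - (U₀ : H →L[ℂ] H) h‖ +
            ‖u (p.2 : ℝ) ((U₀ : H →L[ℂ] H) h) - (U₀ : H →L[ℂ] H) h‖))
      · filter_upwards [htIoo1.eventually eventually_mem_nhdsWithin] with p hp
        have hpIoc : ((p.2 : ℝ)) ∈ Set.Ioc (0:ℝ) 1 := ⟨hp.1, le_of_lt hp.2⟩
        rw [happly (p.1 : H →L[ℂ] H) (p.2 : ℝ) hpIoc]
        set A := u (p.2 : ℝ)
        set B := adjoint (u (p.2 : ℝ))
        set U := (p.1 : H →L[ℂ] H)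
        set V := (U₀ : H →L[ℂ] H)
        have e1 : (h - A (B h) + A (U (B h))) - V h
            = (h - A (B h)) + (A (U (B h)) - V h) := by abel
        rw [e1]
        have c1 : ‖h - A (B h)‖ ≤ ‖h - A h‖ + ‖h - B h‖ := by
          calc ‖h - A (B h)‖ ≤ ‖h - A h‖ + ‖A h - A (B h)‖ := tri _ _ _
            _ = ‖h - A h‖ + ‖h - B h‖ := by
                rw [← map_sub, hisom _ hpIoc (h - B h)]
        have c2 : ‖A (U (B h)) - V h‖ ≤
            ‖h - B h‖ + (‖U h - V h‖ + ‖A (V h) - V h‖) := by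
          calc ‖A (U (B h)) - V h‖
              ≤ ‖A (U (B h)) - A (U h)‖ + ‖A (U h) - V h‖ := tri _ _ _
            _ ≤ ‖h - B h‖ + (‖U h - V h‖ + ‖A (V h) - V h‖) := by
                refine add_le_add ?_ ?_
                · refine le_of_eq ?_
                  rw [← map_sub, hisom _ hpIoc, ← map_sub, hUx U p.1.2, norm_sub_rev]
                · calc ‖A (U h) - V h‖
                      ≤ ‖A (U h) - A (V h)‖ + ‖A (V h) - V h‖ := tri _ _ _
                    _ = ‖U h - V h‖ + ‖A (V h) - V h‖ := by
                        rw [← map_sub, hisom _ hpIoc]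
        calc ‖(h - A (B h)) + (A (U (B h)) - V h)‖
            ≤ ‖h - A (B h)‖ + ‖A (U (B h)) - V h‖ := norm_add_le _ _
          _ ≤ (‖h - A h‖ + ‖h - B h‖) + (‖h - B h‖ + (‖U h - V h‖ + ‖A (V h) - V h‖)) :=
              add_le_add c1 c2
          _ = (‖h - A h‖ + 2 * ‖h - B h‖) + (‖U h - V h‖ + ‖A (V h) - V h‖) := by ring
      · have t1 := ((tendsto_const_nhds (x := h)).sub ((hstrong1 h).comp htIoo1)).norm
        rw [sub_self, norm_zero] at t1
        have t2 := ((tendsto_const_nhds (x := h)).sub ((hstrong1' h).comp htIoo1)).norm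
        rw [sub_self, norm_zero] at t2
        have t2' := t2.const_mul (2:ℝ)
        rw [mul_zero] at t2'
        have t3pre : Tendsto (fun p : ↥(unitary (H →L[ℂ] H)) × ↥(Set.Icc (0:ℝ) 1) =>
            (p.1 : H →L[ℂ] H) h)
            (𝓝 U₀ ×ˢ comap Subtype.val (𝓝[Set.Ioo (0:ℝ) 1] 1)) (𝓝 ((U₀ : H →L[ℂ] H) h)) :=
          ((hev h).tendsto U₀).comp tendsto_fst
        have t3 := (t3pre.sub (tendsto_const_nhds (x := (U₀ : H →L[ℂ] H) h))).norm
        rw [sub_self, norm_zero] at t3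
        have t4 := (((hstrong1 ((U₀ : H →L[ℂ] H) h)).comp htIoo1).sub
          (tendsto_const_nhds (x := (U₀ : H →L[ℂ] H) h))).norm
        rw [sub_self, norm_zero] at t4
        have hfin := (t1.add t2').add (t3.add t4)
        rw [show ((0:ℝ) + 0) + (0 + 0) = 0 by ring] at hfin
        exact hfin
    · -- at the point 1 itself
      have hevq : ∀ᶠ q in (𝓝 U₀ ×ˢ pure (⟨1, ht₀Icc⟩ : ↥(Set.Icc (0:ℝ) 1))),
          Φ ((q.1 : H →L[ℂ] H)) ((q.2 : ℝ)) h = (q.1 : H →L[ℂ] H) h := by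
        filter_upwards [tendsto_snd.eventually (eventually_pure.mpr rfl)] with q hq
        rw [← hq]
        show Φ ((q.1 : H →L[ℂ] H)) (1:ℝ) h = (q.1 : H →L[ℂ] H) h
        rw [hΦ1]
      rw [tendsto_congr' hevq]
      exact ((hev h).tendsto U₀).comp (tendsto_fst
        (f := 𝓝 U₀) (g := pure (⟨1, ht₀Icc⟩ : ↥(Set.Icc (0:ℝ) 1))))
  · -- interior point
    have ht₀Ioo : t₀ ∈ Set.Ioo (0:ℝ) 1 :=
      ⟨lt_of_le_of_ne ht₀Icc.1 (Ne.symm ht0), lt_of_le_of_ne ht₀Icc.2 ht1⟩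
    have ht₀Ioc : t₀ ∈ Set.Ioc (0:ℝ) 1 := ⟨ht₀Ioo.1, ht₀Icc.2⟩
    have htIoo : Tendsto (fun p : ↥(unitary (H →L[ℂ] H)) × ↥(Set.Icc (0:ℝ) 1) => (p.2 : ℝ))
        (𝓝 (U₀, ⟨t₀, ht₀Icc⟩)) (𝓝[Set.Ioo (0:ℝ) 1] t₀) := by
      refine hts.mono_right ?_
      rw [nhdsWithin_eq_nhds.mpr (isOpen_Ioo.mem_nhds ht₀Ioo)]
      exact nhdsWithin_le_nhds
    have hu : Tendsto (fun p : ↥(unitary (H →L[ℂ] H)) × ↥(Set.Icc (0:ℝ) 1) => u (p.2 : ℝ))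
        (𝓝 (U₀, ⟨t₀, ht₀Icc⟩)) (𝓝 (u t₀)) :=
      Tendsto.comp (hcont t₀ ht₀Ioo) htIoo
    show Tendsto (fun p : ↥(unitary (H →L[ℂ] H)) × ↥(Set.Icc (0:ℝ) 1) =>
      Φ (p.1 : H →L[ℂ] H) (p.2 : ℝ) h) (𝓝 (U₀, ⟨t₀, ht₀Icc⟩)) (𝓝 (Φ (U₀ : H →L[ℂ] H) t₀ h))
    apply tendsto_sub_nhds_zero_iff.mp
    apply squeeze_zero_norm'
      (a := fun p : ↥(unitary (H →L[ℂ] H)) × ↥(Set.Icc (0:ℝ) 1) =>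
        ‖u (p.2 : ℝ) - u t₀‖ * ‖h‖ * 4 +
          ‖(p.1 : H →L[ℂ] H) (adjoint (u t₀) h) - (U₀ : H →L[ℂ] H) (adjoint (u t₀) h)‖)
    · filter_upwards [htIoo.eventually eventually_mem_nhdsWithin] with p hp
      have hpIoc : ((p.2 : ℝ)) ∈ Set.Ioc (0:ℝ) 1 := ⟨hp.1, le_of_lt hp.2⟩
      rw [happly (p.1 : H →L[ℂ] H) (p.2 : ℝ) hpIoc, happly (U₀ : H →L[ℂ] H) t₀ ht₀Ioc]
      set A := u (p.2 : ℝ)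
      set B := adjoint (u (p.2 : ℝ))
      set A₀ := u t₀
      set B₀ := adjoint (u t₀)
      set U := (p.1 : H →L[ℂ] H)
      set V := (U₀ : H →L[ℂ] H)
      have e1 : (h - A (B h) + A (U (B h))) - (h - A₀ (B₀ h) + A₀ (V (B₀ h)))
          = (A₀ (B₀ h) - A (B h)) + (A (U (B h)) - A₀ (V (B₀ h))) := by abel
      rw [e1]
      have hBdiff : ‖B h - B₀ h‖ ≤ ‖A - A₀‖ * ‖h‖ := by
        calc ‖B h - B₀ h‖ ≤ ‖B - B₀‖ * ‖h‖ := opapp _ _ _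
          _ = ‖A - A₀‖ * ‖h‖ := by rw [hadjdiff]
      have s1 : ‖A (B h) - A₀ (B h)‖ ≤ ‖A - A₀‖ * ‖h‖ := by
        calc ‖A (B h) - A₀ (B h)‖ ≤ ‖A - A₀‖ * ‖B h‖ := opapp _ _ _
          _ ≤ ‖A - A₀‖ * ‖h‖ :=
            mul_le_mul_of_nonneg_left (hBle _ hpIoc h) (norm_nonneg _)
      have hterm1 : ‖A₀ (B₀ h) - A (B h)‖ ≤ ‖A - A₀‖ * ‖h‖ * 2 := by
        rw [norm_sub_rev]
        calc ‖A (B h) - A₀ (B₀ h)‖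
            ≤ ‖A (B h) - A₀ (B h)‖ + ‖A₀ (B h) - A₀ (B₀ h)‖ := tri _ _ _
          _ ≤ ‖A - A₀‖ * ‖h‖ + ‖A - A₀‖ * ‖h‖ := by
              refine add_le_add s1 ?_
              calc ‖A₀ (B h) - A₀ (B₀ h)‖ = ‖A₀ (B h - B₀ h)‖ := by rw [map_sub]
                _ = ‖B h - B₀ h‖ := hisom t₀ ht₀Ioc _
                _ ≤ ‖A - A₀‖ * ‖h‖ := hBdiff
          _ = ‖A - A₀‖ * ‖h‖ * 2 := by ring
      have hterm2 : ‖A (U (B h)) - A₀ (V (B₀ h))‖ ≤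
          ‖A - A₀‖ * ‖h‖ * 2 + ‖U (B₀ h) - V (B₀ h)‖ := by
        calc ‖A (U (B h)) - A₀ (V (B₀ h))‖
            ≤ ‖A (U (B h)) - A₀ (U (B h))‖ + ‖A₀ (U (B h)) - A₀ (V (B₀ h))‖ := tri _ _ _
          _ ≤ ‖A - A₀‖ * ‖h‖ + (‖A - A₀‖ * ‖h‖ + ‖U (B₀ h) - V (B₀ h)‖) := by
              refine add_le_add ?_ ?_
              · calc ‖A (U (B h)) - A₀ (U (B h))‖ ≤ ‖A - A₀‖ * ‖U (B h)‖ := opapp _ _ _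
                  _ ≤ ‖A - A₀‖ * ‖h‖ := by
                    refine mul_le_mul_of_nonneg_left ?_ (norm_nonneg _)
                    rw [hUx U p.1.2 (B h)]
                    exact hBle _ hpIoc h
              · calc ‖A₀ (U (B h)) - A₀ (V (B₀ h))‖
                    = ‖A₀ (U (B h) - V (B₀ h))‖ := by rw [map_sub]
                  _ = ‖U (B h) - V (B₀ h)‖ := hisom t₀ ht₀Ioc _
                  _ ≤ ‖U (B h) - U (B₀ h)‖ + ‖U (B₀ h) - V (B₀ h)‖ := tri _ _ _
                  _ ≤ ‖A - A₀‖ * ‖h‖ + ‖U (B₀ h) - V (B₀ h)‖ := by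
                      refine add_le_add ?_ le_rfl
                      calc ‖U (B h) - U (B₀ h)‖ = ‖U (B h - B₀ h)‖ := by rw [map_sub]
                        _ = ‖B h - B₀ h‖ := hUx U p.1.2 _
                        _ ≤ ‖A - A₀‖ * ‖h‖ := hBdiff
          _ = ‖A - A₀‖ * ‖h‖ * 2 + ‖U (B₀ h) - V (B₀ h)‖ := by ring
      calc ‖(A₀ (B₀ h) - A (B h)) + (A (U (B h)) - A₀ (V (B₀ h)))‖
          ≤ ‖A₀ (B₀ h) - A (B h)‖ + ‖A (U (B h)) - A₀ (V (B₀ h))‖ := norm_add_le _ _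
        _ ≤ ‖A - A₀‖ * ‖h‖ * 2 + (‖A - A₀‖ * ‖h‖ * 2 + ‖U (B₀ h) - V (B₀ h)‖) :=
            add_le_add hterm1 hterm2
        _ = ‖A - A₀‖ * ‖h‖ * 4 + ‖U (B₀ h) - V (B₀ h)‖ := by ring
    · have hgu : Tendsto
          (fun p : ↥(unitary (H →L[ℂ] H)) × ↥(Set.Icc (0:ℝ) 1) => ‖u (p.2 : ℝ) - u t₀‖)
          (𝓝 (U₀, ⟨t₀, ht₀Icc⟩)) (𝓝 0) := by
        have h3 := (hu.sub (tendsto_const_nhds (x := u t₀))).norm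
        rw [sub_self, norm_zero] at h3
        exact h3
      have hgU : Tendsto
          (fun p : ↥(unitary (H →L[ℂ] H)) × ↥(Set.Icc (0:ℝ) 1) =>
            ‖(p.1 : H →L[ℂ] H) (adjoint (u t₀) h) - (U₀ : H →L[ℂ] H) (adjoint (u t₀) h)‖)
          (𝓝 (U₀, ⟨t₀, ht₀Icc⟩)) (𝓝 0) := by
        have h2 : Tendsto
            (fun p : ↥(unitary (H →L[ℂ] H)) × ↥(Set.Icc (0:ℝ) 1) =>
              (p.1 : H →L[ℂ] H) (adjoint (u t₀) h))
            (𝓝 (U₀, ⟨t₀, ht₀Icc⟩)) (𝓝 ((U₀ : H →L[ℂ] H) (adjoint (u t₀) h))) :=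
          ((hev (adjoint (u t₀) h)).tendsto U₀).comp (continuous_fst.tendsto _)
        have h3 := (h2.sub (tendsto_const_nhds
          (x := (U₀ : H →L[ℂ] H) (adjoint (u t₀) h)))).norm
        rw [sub_self, norm_zero] at h3
        exact h3
      have hfin := ((hgu.mul_const ‖h‖).mul_const 4).add hgU
      rw [show (0:ℝ) * ‖h‖ * 4 + 0 = 0 by ring] at hfin
      exact hfin
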